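/- If two operation sequences u and v of the same length both produce the same permutation π on a deque and both output eagerly, then u and v have the same type (i.e., deleting subscripts yields the same word over {I,O}), and for each i, the i-th operation of u moves the same item as the i-th operation of v. -/

import Mathlib

/-- The four deque operations: input to the top/bottom, output from the top/bottom. -/
inductive Letter : Type
  | I1 | I2 | O1 | O2
  deriving DecidableEq, Repr

open Letter

/-- Whether a letter is an input operation. -/
def Letter.isI : Letter → Bool
  | I1 => true | I2 => true | O1 => false | O2 => false

/-- Number of input letters in a word. -/
def countI (w : List Letter) : ℕ := (w.filter Letter.isI).length

/-- Number of output letters in a word. -/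
def countO (w : List Letter) : ℕ := (w.filter fun x => !x.isI).length

/-- An operation sequence: equally many inputs and outputs, and every prefix has at
least as many inputs as outputs. -/
def IsOpSeq (w : List Letter) : Prop :=
  countI w = countO w ∧ ∀ m : ℕ, countO (w.take m) ≤ countI (w.take m)

/-- A tsip word: for each end `j ∈ {1,2}` of the deque, the number of `Iⱼ` equals the
number of `Oⱼ`, and every prefix contains at least as many `Iⱼ` as `Oⱼ`. -/
def IsTsip (w : List Letter) : Prop :=
  (w.count I1 = w.count O1) ∧ (w.count I2 = w.count O2) ∧
    ∀ m : ℕ, (w.take m).count O1 ≤ (w.take m).count I1 ∧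
      (w.take m).count O2 ≤ (w.take m).count I2

/-- A word outputs eagerly if it contains no consecutive sub-word `I₁O₂` or `I₂O₁`. -/
def OutputsEagerly (w : List Letter) : Prop :=
  ¬ [I1, O2] <:+: w ∧ ¬ [I2, O1] <:+: w

/-- A word is standard if every non-empty tsip sub-word begins with `I₁`. -/
def Standard (w : List Letter) : Prop :=
  ∀ u : List Letter, u <:+: w → IsTsip u → u ≠ [] → u.head? = some I1

/-- A word is top happy if `I₂` and `O₂` occur only when the number of preceding inputs
exceeds the number of preceding outputs by at least two (i.e. the deque holds at least
two items). -/
def TopHappy (w : List Letter) : Prop :=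
  ∀ u v : List Letter, ∀ x : Letter, w = u ++ x :: v → (x = I2 ∨ x = O2) →
    countO u + 2 ≤ countI u

/-- A canonical operation sequence: outputs eagerly, standard and top happy. -/
def Canonical (w : List Letter) : Prop :=
  OutputsEagerly w ∧ Standard w ∧ TopHappy w

/-- The state of a deque machine: the remaining input, the deque contents (top first),
and the output produced so far. -/
structure DequeState : Type where
  inp : List ℕ
  dq : List ℕ
  out : List ℕ
  deriving DecidableEq, Repr

/-- Apply a single operation to a deque state, if possible. -/
def applyOp : Letter → DequeState → Option DequeState
  | I1, ⟨a :: r, d, o⟩ => some ⟨r, a :: d, o⟩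
  | I2, ⟨a :: r, d, o⟩ => some ⟨r, d ++ [a], o⟩
  | O1, ⟨r, a :: d, o⟩ => some ⟨r, d, o ++ [a]⟩
  | O2, ⟨r, d, o⟩ =>
      match d.getLast? with
      | some a => some ⟨r, d.dropLast, o ++ [a]⟩
      | none => none
  | I1, ⟨[], _, _⟩ => none
  | I2, ⟨[], _, _⟩ => none
  | O1, ⟨_, [], _⟩ => none

/-- Run a word of operations on a deque state. -/
def runOps : List Letter → DequeState → Option DequeState
  | [], s => some s
  | x :: w, s => (applyOp x s).bind (runOps w)

/-- `w` produces the permutation (given as the list `l`): applying `w` to the identity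
input `0, 1, …, l.length - 1` empties the input and the deque with output exactly `l`. -/
def Produces (w : List Letter) (l : List ℕ) : Prop :=
  runOps w ⟨List.range l.length, [], []⟩ = some ⟨[], [], l⟩

/-- A list is deque-achievable if it is a permutation of `0, …, n-1` produced by some
operation sequence. -/
def DequeAchievable (l : List ℕ) : Prop := ∃ w : List Letter, Produces w l

/-- The item moved by an operation, given the state just before it is applied. -/
def movedElt : Letter → DequeState → Option ℕ
  | Letter.I1, s => s.inp.head?
  | Letter.I2, s => s.inp.head?
  | Letter.O1, s => s.dq.head?
  | Letter.O2, s => s.dq.getLast?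

/-- The item moved by the `i`-th operation of `w`, started on the identity input of
length `n`. -/
def movedAt (w : List Letter) (n i : ℕ) : Option ℕ :=
  (runOps (w.take i) ⟨List.range n, [], []⟩).bind fun s =>
    (w[i]?).bind fun x => movedElt x s


section Aux
open Letter

/-- The multiset of all items present in a state. -/
def mset (s : DequeState) : Multiset ℕ := (↑s.inp + ↑s.dq + ↑s.out : Multiset ℕ)

lemma applyOp_mset {a : Letter} {s s' : DequeState} (h : applyOp a s = some s') :
    mset s' = mset s := by
  rcases s with ⟨inp, dq, out⟩
  cases a with
  | I1 =>
    cases inp with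
    | nil => simp [applyOp] at h
    | cons b r =>
      simp [applyOp] at h; subst h
      refine Multiset.ext.2 fun y => ?_
      simp [mset, List.count_cons, List.count_append]; try ring
  | I2 =>
    cases inp with
    | nil => simp [applyOp] at h
    | cons b r =>
      simp [applyOp] at h; subst h
      refine Multiset.ext.2 fun y => ?_
      simp [mset, List.count_cons, List.count_append]; try ring
  | O1 =>
    cases dq with
    | nil => simp [applyOp] at h
    | cons b d =>
      simp [applyOp] at h; subst h
      refine Multiset.ext.2 fun y => ?_
      simp [mset, List.count_cons, List.count_append]; try ring
  | O2 =>
    cases hg : dq.getLast? with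
    | none => simp [applyOp, hg] at h
    | some b =>
      simp [applyOp, hg] at h; subst h
      have hdq : dq.dropLast ++ [b] = dq := List.dropLast_append_getLast? b hg
      refine Multiset.ext.2 fun y => ?_
      conv_rhs => rw [← hdq]
      simp [mset, List.count_cons, List.count_append]; try ring

lemma runOps_mset : ∀ {w : List Letter} {s s' : DequeState},
    runOps w s = some s' → mset s' = mset s := by
  intro w
  induction w with
  | nil => intro s s' h; simp [runOps] at h; subst h; rfl
  | cons a w ih =>
    intro s s' h
    cases ha : applyOp a s with
    | none => simp [runOps, ha] at h
    | some s1 =>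
      simp only [runOps, ha, Option.bind_some] at h
      exact (ih h).trans (applyOp_mset ha)

lemma applyOp_out_prefix {a : Letter} {s s' : DequeState} (h : applyOp a s = some s') :
    s.out <+: s'.out := by
  rcases s with ⟨inp, dq, out⟩
  cases a with
  | I1 => cases inp with
    | nil => simp [applyOp] at h
    | cons b r => simp [applyOp] at h; subst h; exact List.prefix_rfl
  | I2 => cases inp with
    | nil => simp [applyOp] at h
    | cons b r => simp [applyOp] at h; subst h; exact List.prefix_rfl
  | O1 => cases dq with
    | nil => simp [applyOp] at h
    | cons b d => simp [applyOp] at h; subst h; exact ⟨[b], rfl⟩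
  | O2 => cases hg : dq.getLast? with
    | none => simp [applyOp, hg] at h
    | some b => simp [applyOp, hg] at h; subst h; exact ⟨[b], rfl⟩

lemma runOps_out_prefix : ∀ {w : List Letter} {s s' : DequeState},
    runOps w s = some s' → s.out <+: s'.out := by
  intro w
  induction w with
  | nil => intro s s' h; simp [runOps] at h; subst h; exact List.prefix_rfl
  | cons a w ih =>
    intro s s' h
    cases ha : applyOp a s with
    | none => simp [runOps, ha] at h
    | some s1 =>
      simp only [runOps, ha, Option.bind_some] at h
      exact (applyOp_out_prefix ha).trans (ih h)

lemma runOps_append (w1 w2 : List Letter) (s : DequeState) :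
    runOps (w1 ++ w2) s = (runOps w1 s).bind (runOps w2) := by
  induction w1 generalizing s with
  | nil => simp [runOps]
  | cons a w ih =>
    cases ha : applyOp a s with
    | none => simp [runOps, ha]
    | some s1 => simp [runOps, ha, ih]

lemma eager_drop {w : List Letter} (h : OutputsEagerly w) (i : ℕ) :
    OutputsEagerly (w.drop i) := by
  refine ⟨fun hc => h.1 ?_, fun hc => h.2 ?_⟩ <;>
    exact hc.trans (List.drop_suffix i w).isInfix

lemma next_out_eq {out l : List ℕ} {x y : ℕ}
    (hx : l[out.length]? = some x) (hpre2 : out ++ [y] <+: l) : y = x := by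
  obtain ⟨t, rfl⟩ := hpre2
  rw [List.getElem?_append_left (by simp : out.length < (out ++ [y]).length),
    List.getElem?_concat_length] at hx
  exact Option.some_injective _ hx

lemma eager_out : ∀ {w : List Letter} {s : DequeState} {l : List ℕ} {x : ℕ},
    OutputsEagerly w → runOps w s = some ⟨[], [], l⟩ →
    s.out.length < l.length → l[s.out.length]? = some x →
    x ∈ s.dq → x ∉ s.inp →
    ∃ w', (w = O1 :: w' ∧ s.dq.head? = some x) ∨ (w = O2 :: w' ∧ s.dq.getLast? = some x) := by
  intro w
  induction w with
  | nil =>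
    intro s l x _ hrun hlen _ _ _
    rcases s with ⟨inp, dq, out⟩
    simp only [runOps, Option.some.injEq, DequeState.mk.injEq] at hrun
    obtain ⟨-, -, rfl⟩ := hrun
    exact absurd hlen (lt_irrefl _)
  | cons a w ih =>
    intro s l x hw hrun hlen hx hdq hinp
    rcases s with ⟨inp, dq, out⟩
    cases a with
    | O1 =>
      cases dq with
      | nil => simp at hdq
      | cons y d =>
        simp only [runOps, applyOp, Option.bind_some] at hrun
        have hpre : out ++ [y] <+: l := runOps_out_prefix hrun
        have : y = x := next_out_eq hx hpre
        exact ⟨w, Or.inl ⟨rfl, by simp [this]⟩⟩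
    | O2 =>
      cases hg : dq.getLast? with
      | none => simp [runOps, applyOp, hg] at hrun
      | some y =>
        simp only [runOps, applyOp, hg, Option.bind_some] at hrun
        have hpre : out ++ [y] <+: l := runOps_out_prefix hrun
        have : y = x := next_out_eq hx hpre
        exact ⟨w, Or.inr ⟨rfl, congrArg some this⟩⟩
    | I1 =>
      cases inp with
      | nil => simp [runOps, applyOp] at hrun
      | cons b r =>
        simp only [runOps, applyOp, Option.bind_some] at hrun
        have hw' : OutputsEagerly w := by
          refine ⟨fun hc => hw.1 ?_, fun hc => hw.2 ?_⟩ <;>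
            exact hc.trans (List.suffix_cons _ _).isInfix
        have hxb : x ≠ b := by simp at hinp; tauto
        have hxr : x ∉ r := by simp at hinp; tauto
        obtain ⟨w', hc⟩ := ih hw' hrun hlen hx (List.mem_cons_of_mem b hdq) hxr
        rcases hc with ⟨rfl, hhead⟩ | ⟨rfl, _⟩
        · simp at hhead; exact absurd hhead.symm hxb
        · exact absurd ⟨[], w', rfl⟩ hw.1
    | I2 =>
      cases inp with
      | nil => simp [runOps, applyOp] at hrun
      | cons b r =>
        simp only [runOps, applyOp, Option.bind_some] at hrun
        have hw' : OutputsEagerly w := by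
          refine ⟨fun hc => hw.1 ?_, fun hc => hw.2 ?_⟩ <;>
            exact hc.trans (List.suffix_cons _ _).isInfix
        have hxb : x ≠ b := by simp at hinp; tauto
        have hxr : x ∉ r := by simp at hinp; tauto
        obtain ⟨w', hc⟩ := ih hw' hrun hlen hx (List.mem_append_left [b] hdq) hxr
        rcases hc with ⟨rfl, _⟩ | ⟨rfl, hlast⟩
        · exact absurd ⟨[], w', rfl⟩ hw.2
        · rw [List.getLast?_concat] at hlast
          exact absurd (Option.some_injective _ hlast).symm hxb

lemma eager_in {w : List Letter} {s : DequeState} {l : List ℕ} {x : ℕ}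
    (hrun : runOps w s = some ⟨[], [], l⟩)
    (hlen : s.out.length < l.length) (hx : l[s.out.length]? = some x)
    (hdq : x ∉ s.dq) :
    ∃ w' b r, (w = I1 :: w' ∨ w = I2 :: w') ∧ s.inp = b :: r := by
  rcases s with ⟨inp, dq, out⟩
  cases w with
  | nil =>
    simp only [runOps, Option.some.injEq, DequeState.mk.injEq] at hrun
    obtain ⟨-, -, rfl⟩ := hrun
    exact absurd hlen (lt_irrefl _)
  | cons a w =>
    cases a with
    | I1 =>
      cases inp with
      | nil => simp [runOps, applyOp] at hrun
      | cons b r => exact ⟨w, b, r, Or.inl rfl, rfl⟩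
    | I2 =>
      cases inp with
      | nil => simp [runOps, applyOp] at hrun
      | cons b r => exact ⟨w, b, r, Or.inr rfl, rfl⟩
    | O1 =>
      cases dq with
      | nil => simp [runOps, applyOp] at hrun
      | cons y d =>
        simp only [runOps, applyOp, Option.bind_some] at hrun
        have : y = x := next_out_eq hx (runOps_out_prefix hrun)
        exact absurd (this ▸ (List.mem_cons_self (a := y) (l := d))) hdq
    | O2 =>
      cases hg : dq.getLast? with
      | none => simp [runOps, applyOp, hg] at hrun
      | some y =>
        simp only [runOps, applyOp, hg, Option.bind_some] at hrun
        have hyx : y = x := next_out_eq hx (runOps_out_prefix hrun)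
        have : y ∈ dq := by
          rw [← List.dropLast_append_getLast? y hg]; simp
        exact absurd (hyx ▸ this) hdq

lemma out_step {u : List Letter} {i : ℕ} {su s0 : DequeState} {x : ℕ} {w' : List Letter}
    (hru : runOps (u.take i) s0 = some su)
    (hcase : (u.drop i = O1 :: w' ∧ su.dq.head? = some x) ∨
      (u.drop i = O2 :: w' ∧ su.dq.getLast? = some x)) :
    ∃ a su', u[i]? = some a ∧ a.isI = false ∧
      runOps (u.take (i + 1)) s0 = some su' ∧ su'.inp = su.inp ∧
      su'.out = su.out ++ [x] ∧ movedElt a su = some x := by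
  rcases su with ⟨inp, dq, out⟩
  rcases hcase with ⟨hd, hhead⟩ | ⟨hd, hlast⟩
  · have hget : u[i]? = some O1 := by
      rw [← List.head?_drop, hd]; rfl
    cases dq with
    | nil => simp at hhead
    | cons y d =>
      simp only [List.head?_cons, Option.some.injEq] at hhead
      refine ⟨O1, ⟨inp, d, out ++ [y]⟩, hget, rfl, ?_, rfl, by rw [hhead], by simp [movedElt, hhead]⟩
      rw [List.take_succ, runOps_append, hru, hget]
      simp [runOps, applyOp]
  · have hget : u[i]? = some O2 := by
      rw [← List.head?_drop, hd]; rfl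
    refine ⟨O2, ⟨inp, dq.dropLast, out ++ [x]⟩, hget, rfl, ?_, rfl, rfl, hlast⟩
    rw [List.take_succ, runOps_append, hru, hget]
    simp [runOps, applyOp, hlast]

lemma in_step {u : List Letter} {i : ℕ} {su s0 : DequeState} {b : ℕ} {r : List ℕ}
    {w' : List Letter}
    (hru : runOps (u.take i) s0 = some su)
    (hcase : u.drop i = I1 :: w' ∨ u.drop i = I2 :: w')
    (hinp : su.inp = b :: r) :
    ∃ a su', u[i]? = some a ∧ a.isI = true ∧
      runOps (u.take (i + 1)) s0 = some su' ∧ su'.inp = r ∧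
      su'.out = su.out ∧ movedElt a su = some b := by
  rcases su with ⟨inp, dq, out⟩
  simp only at hinp
  subst hinp
  rcases hcase with hd | hd
  · have hget : u[i]? = some I1 := by
      rw [← List.head?_drop, hd]; rfl
    refine ⟨I1, ⟨r, b :: dq, out⟩, hget, rfl, ?_, rfl, rfl, rfl⟩
    rw [List.take_succ, runOps_append, hru, hget]
    simp [runOps, applyOp]
  · have hget : u[i]? = some I2 := by
      rw [← List.head?_drop, hd]; rfl
    refine ⟨I2, ⟨r, dq ++ [b], out⟩, hget, rfl, ?_, rfl, rfl, rfl⟩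
    rw [List.take_succ, runOps_append, hru, hget]
    simp [runOps, applyOp]

end Aux

/-- If two operation sequences produce the same permutation and both output eagerly,
then they have the same type (the word obtained by erasing subscripts), and for each `i`
the `i`-th operation of each moves the same item. -/
theorem stmt_6 (l : List ℕ) (u v : List Letter)
    (hu : Produces u l) (hv : Produces v l)
    (heu : OutputsEagerly u) (hev : OutputsEagerly v) :
    u.map Letter.isI = v.map Letter.isI ∧
      ∀ i : ℕ, movedAt u l.length i = movedAt v l.length i := by
  classical
  have key : ∀ i : ℕ, ∃ su sv,
      runOps (u.take i) ⟨List.range l.length, [], []⟩ = some su ∧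
      runOps (v.take i) ⟨List.range l.length, [], []⟩ = some sv ∧
      su.inp = sv.inp ∧ su.out = sv.out ∧
      (u.take i).map Letter.isI = (v.take i).map Letter.isI ∧
      ∀ j < i, movedAt u l.length j = movedAt v l.length j := by
    have hml : (↑l : Multiset ℕ) = ↑(List.range l.length) := by
      have h := runOps_mset hu
      simp only [mset] at h
      simpa using h
    have hndl : (↑l : Multiset ℕ).Nodup := by
      rw [hml]; exact_mod_cast (List.nodup_range (n := l.length))
    intro i
    induction i with
    | zero =>
      exact ⟨⟨List.range l.length, [], []⟩, ⟨List.range l.length, [], []⟩,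
        rfl, rfl, rfl, rfl, rfl, by omega⟩
    | succ i ih =>
      obtain ⟨su, sv, hru, hrv, hinp, hout, hmap, hmov⟩ := ih
      have hdu : runOps (u.drop i) su = some ⟨[], [], l⟩ := by
        have h := hu
        rw [Produces, ← List.take_append_drop i u, runOps_append, hru] at h
        simpa using h
      have hdv : runOps (v.drop i) sv = some ⟨[], [], l⟩ := by
        have h := hv
        rw [Produces, ← List.take_append_drop i v, runOps_append, hrv] at h
        simpa using h
      have hmsu : mset su = (↑l : Multiset ℕ) := by
        have h := runOps_mset hru
        rw [h, hml]
        simp only [mset]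
        simp
      have hmsv : mset sv = (↑l : Multiset ℕ) := by
        have h := runOps_mset hrv
        rw [h, hml]
        simp only [mset]
        simp
      have hdqm : (↑su.dq : Multiset ℕ) = ↑sv.dq := by
        have h := hmsu.trans hmsv.symm
        simp only [mset, hinp, hout] at h
        have h2 : (↑sv.inp : Multiset ℕ) + ↑su.dq + ↑sv.out
            = ↑sv.inp + ↑sv.dq + ↑sv.out := h
        exact add_left_cancel (add_right_cancel h2)
      by_cases hfin : su.out.length < l.length
      · obtain ⟨x, hx⟩ : ∃ x, l[su.out.length]? = some x :=
          ⟨l[su.out.length], List.getElem?_eq_getElem hfin⟩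
        by_cases hxd : x ∈ su.dq
        · -- output step
          have hxdv : x ∈ sv.dq := by
            have : x ∈ (↑sv.dq : Multiset ℕ) := hdqm ▸ (by exact_mod_cast hxd)
            exact_mod_cast this
          have hdisj : ∀ s : DequeState, mset s = (↑l : Multiset ℕ) →
              x ∈ s.dq → x ∉ s.inp := by
            intro s hms hxs hxi
            have hnd : (mset s).Nodup := hms ▸ hndl
            have h1 := (Multiset.nodup_add.1 ((Multiset.nodup_add.1 hnd).1)).2.2
            exact (Multiset.disjoint_left.1 h1 (by exact_mod_cast hxi))
              (by exact_mod_cast hxs)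
          obtain ⟨wu, hcu⟩ := eager_out (eager_drop heu i) hdu hfin hx hxd
            (hdisj su hmsu hxd)
          obtain ⟨wv, hcv⟩ := eager_out (eager_drop hev i) hdv
            (hout ▸ hfin) (hout ▸ hx) hxdv (hdisj sv hmsv hxdv)
          obtain ⟨a, su', hgu, hiu, hru', hinp'u, hout'u, hmu⟩ := out_step hru hcu
          obtain ⟨b, sv', hgv, hiv, hrv', hinp'v, hout'v, hmv⟩ := out_step hrv hcv
          refine ⟨su', sv', hru', hrv', by rw [hinp'u, hinp'v, hinp],
            by rw [hout'u, hout'v, hout], ?_, ?_⟩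
          · rw [List.take_succ, List.take_succ, hgu, hgv]
            simp [hmap, hiu, hiv]
          · intro j hj
            rcases Nat.lt_succ_iff_lt_or_eq.1 hj with hj | hj
            · exact hmov j hj
            · rw [hj]
              have hgu' : u[i]? = some a := by
                exact hgu
              have hgv' : v[i]? = some b := by
                exact hgv
              simp [movedAt, hru, hrv, hgu', hgv', hmu, hmv]
        · -- input step
          have hxdv : x ∉ sv.dq := by
            intro hc
            exact hxd (by exact_mod_cast hdqm ▸ (by exact_mod_cast hc :
              x ∈ (↑sv.dq : Multiset ℕ)))
          obtain ⟨wu, b, r, hcu, hiu⟩ := eager_in hdu hfin hx hxd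
          obtain ⟨wv, b', r', hcv, hiv⟩ := eager_in hdv (hout ▸ hfin) (hout ▸ hx) hxdv
          have hiv' : sv.inp = b :: r := by rw [← hinp, hiu]
          obtain ⟨a, su', hgu, hau, hru', hinp'u, hout'u, hmu⟩ := in_step hru hcu hiu
          obtain ⟨c, sv', hgv, hav, hrv', hinp'v, hout'v, hmv⟩ := in_step hrv hcv hiv'
          refine ⟨su', sv', hru', hrv', by rw [hinp'u, hinp'v],
            by rw [hout'u, hout'v, hout], ?_, ?_⟩
          · rw [List.take_succ, List.take_succ, hgu, hgv]
            simp [hmap, hau, hav]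
          · intro j hj
            rcases Nat.lt_succ_iff_lt_or_eq.1 hj with hj | hj
            · exact hmov j hj
            · rw [hj]
              have hgu' : u[i]? = some a := by
                exact hgu
              have hgv' : v[i]? = some c := by
                exact hgv
              simp [movedAt, hru, hrv, hgu', hgv', hmu, hmv]
      · -- already finished
        push_neg at hfin
        have hpre : su.out <+: l := runOps_out_prefix hdu
        have houtl : su.out = l := hpre.eq_of_length (le_antisymm hpre.length_le hfin)
        have hzero : (↑su.inp : Multiset ℕ) + ↑su.dq = 0 := by
          have h := hmsu
          simp only [mset, houtl] at h
          have h2 : (↑su.inp : Multiset ℕ) + ↑su.dq + ↑l = 0 + ↑l := by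
            rw [h, zero_add]
          exact add_right_cancel h2
        have hinpu : su.inp = [] :=
          (Multiset.coe_eq_zero _).1 (add_eq_zero.1 hzero).1
        have hdqu : su.dq = [] :=
          (Multiset.coe_eq_zero _).1 (add_eq_zero.1 hzero).2
        have hdqv : sv.dq = [] := by
          refine (Multiset.coe_eq_zero _).1 ?_
          rw [← hdqm, hdqu]
          simp
        have hsu : su = ⟨[], [], l⟩ := by
          rcases su with ⟨a, b, c⟩; simp_all
        have hsv : sv = ⟨[], [], l⟩ := by
          rcases sv with ⟨a, b, c⟩
          simp only at hinp hout hdqv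
          rw [hsu] at hinp hout
          simp_all
        have hlenu : u.length ≤ i := by
          rw [← List.drop_eq_nil_iff]
          cases hd : u.drop i with
          | nil => rfl
          | cons a w =>
            rw [hd, hsu] at hdu
            exfalso
            cases a <;> simp [runOps, applyOp] at hdu
        have hlenv : v.length ≤ i := by
          rw [← List.drop_eq_nil_iff]
          cases hd : v.drop i with
          | nil => rfl
          | cons a w =>
            rw [hd, hsv] at hdv
            exfalso
            cases a <;> simp [runOps, applyOp] at hdv
        have htu : u.take (i + 1) = u.take i := by
          rw [List.take_of_length_le hlenu, List.take_of_length_le (by omega)]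
        have htv : v.take (i + 1) = v.take i := by
          rw [List.take_of_length_le hlenv, List.take_of_length_le (by omega)]
        refine ⟨su, sv, htu ▸ hru, htv ▸ hrv, hinp, hout, by rw [htu, htv, hmap], ?_⟩
        intro j hj
        rcases Nat.lt_succ_iff_lt_or_eq.1 hj with hj | hj
        · exact hmov j hj
        · rw [hj]
          have h1 : u[i]? = none := List.getElem?_eq_none hlenu
          have h2 : v[i]? = none := List.getElem?_eq_none hlenv
          simp [movedAt, hru, hrv, h1, h2]
  constructor
  · obtain ⟨_, _, _, _, _, _, hmap, _⟩ := key (u.length + v.length)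
    rwa [List.take_of_length_le (by omega), List.take_of_length_le (by omega)] at hmap
  · intro i
    obtain ⟨_, _, _, _, _, _, _, hmov⟩ := key (i + 1)
    exact hmov i (by omega)
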